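/- arXiv:1402.4443 — 3 statements merged into one kernel-verified Lean document; each statement's English description precedes it below -/
import Mathlib

section
/- Let φ ∈ C_c^∞(ℝⁿ) be a nonnegative radial function supported in the unit ball, nonincreasing in the radius, with φ(x) = 1 whenever |x| ≤ 3/4. Let α, β > 0 and let μ be a finite real signed Borel measure on ℝⁿ such that for some constant C and every finite collection of balls B_{r_j}(x_j) for which the enlarged balls B_{3r_j}(x_j) are pairwise disjoint, Σ_j | ∫_{ℝⁿ} φ( (x_j + y)/(3 r_j) ) dμ(y) | ≤ C (Σ_j r_j^α)^β. Then dim μ ≥ α, i.e. μ(F) = 0 for every Borel set F with Hausdorff dimension dimH F < α. -/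
open MeasureTheory

/-- Integral of a real function against a finite signed Borel measure,
via the Jordan decomposition. -/
noncomputable def sintegral {X : Type*} [MeasurableSpace X] (μ : SignedMeasure X)
    (g : X → ℝ) : ℝ :=
  (∫ x, g x ∂μ.toJordanDecomposition.posPart) - ∫ x, g x ∂μ.toJordanDecomposition.negPart

open Metric Set
open scoped NNReal ENNReal

section Phi
variable {n : ℕ} {φ : EuclideanSpace ℝ (Fin n) → ℝ}

lemma phi_le_one (hφmono : ∀ x y : EuclideanSpace ℝ (Fin n), ‖x‖ ≤ ‖y‖ → φ y ≤ φ x)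
    (hφone : ∀ x : EuclideanSpace ℝ (Fin n), ‖x‖ ≤ 3 / 4 → φ x = 1) (x) : φ x ≤ 1 := by
  have := hφmono 0 x (by simp)
  rwa [hφone 0 (by simp; norm_num)] at this

lemma phi_eq_one {z y : EuclideanSpace ℝ (Fin n)} {r : ℝ} (hr : 0 < r)
    (hφone : ∀ x : EuclideanSpace ℝ (Fin n), ‖x‖ ≤ 3 / 4 → φ x = 1)
    (h : y ∈ closedBall z (9 / 4 * r)) : φ ((3 * r)⁻¹ • (y - z)) = 1 := by
  apply hφone
  rw [norm_smul, norm_inv, Real.norm_eq_abs, abs_of_pos (by linarith)]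
  rw [mem_closedBall, dist_eq_norm] at h
  rw [inv_mul_le_iff₀ (by linarith)]
  calc ‖y - z‖ ≤ 9 / 4 * r := h
    _ = 3 * r * (3/4) := by ring

lemma phi_eq_zero {z y : EuclideanSpace ℝ (Fin n)} {r : ℝ} (hr : 0 < r)
    (hφsupp : tsupport φ ⊆ Metric.closedBall 0 1)
    (h : y ∉ closedBall z (3 * r)) : φ ((3 * r)⁻¹ • (y - z)) = 0 := by
  apply image_eq_zero_of_notMem_tsupport
  intro hmem
  apply h
  have := hφsupp hmem
  rw [mem_closedBall, dist_zero_right, norm_smul, norm_inv, Real.norm_eq_abs,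
    abs_of_pos (by linarith), inv_mul_le_iff₀ (by linarith), mul_one] at this
  rwa [mem_closedBall, dist_eq_norm]

end Phi

section Int
variable {n : ℕ} {φ : EuclideanSpace ℝ (Fin n) → ℝ}

lemma g_integrable (hφcont : Continuous φ) (hφpos : ∀ x, 0 ≤ φ x)
    (hφle1 : ∀ x, φ x ≤ 1)
    (ν : Measure (EuclideanSpace ℝ (Fin n))) [IsFiniteMeasure ν] (z : EuclideanSpace ℝ (Fin n))
    (r : ℝ) : Integrable (fun y => φ ((3 * r)⁻¹ • (y - z))) ν := by
  have hc : Continuous (fun y : EuclideanSpace ℝ (Fin n) => φ ((3 * r)⁻¹ • (y - z))) :=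
    hφcont.comp (by fun_prop)
  refine (integrable_const (1 : ℝ)).mono' hc.aestronglyMeasurable ?_
  filter_upwards with y
  rw [Real.norm_eq_abs, abs_of_nonneg (hφpos _)]
  exact hφle1 _

lemma int_lb (hφcont : Continuous φ) (hφpos : ∀ x, 0 ≤ φ x)
    (hφmono : ∀ x y : EuclideanSpace ℝ (Fin n), ‖x‖ ≤ ‖y‖ → φ y ≤ φ x)
    (hφone : ∀ x : EuclideanSpace ℝ (Fin n), ‖x‖ ≤ 3 / 4 → φ x = 1)
    (ν : Measure (EuclideanSpace ℝ (Fin n))) [IsFiniteMeasure ν] (z : EuclideanSpace ℝ (Fin n))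
    {r : ℝ} (hr : 0 < r) :
    (ν (closedBall z (9 / 4 * r))).toReal ≤ ∫ y, φ ((3 * r)⁻¹ • (y - z)) ∂ν := by
  have h1 : (ν (closedBall z (9 / 4 * r))).toReal
      = ∫ y, (closedBall z (9 / 4 * r)).indicator (fun _ => (1:ℝ)) y ∂ν := by
    rw [MeasureTheory.integral_indicator_const _ measurableSet_closedBall, smul_eq_mul, mul_one, measureReal_def]
  rw [h1]
  refine integral_mono ((integrable_const (1:ℝ)).indicator measurableSet_closedBall)
    (g_integrable hφcont hφpos (phi_le_one hφmono hφone) ν z r) ?_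
  intro y
  by_cases hy : y ∈ closedBall z (9 / 4 * r)
  · simp only [indicator_of_mem hy]
    rw [phi_eq_one hr hφone hy]
  · simp only [indicator_of_notMem hy]
    exact hφpos _

lemma int_ub (hφcont : Continuous φ) (hφpos : ∀ x, 0 ≤ φ x)
    (hφsupp : tsupport φ ⊆ Metric.closedBall 0 1)
    (hφmono : ∀ x y : EuclideanSpace ℝ (Fin n), ‖x‖ ≤ ‖y‖ → φ y ≤ φ x)
    (hφone : ∀ x : EuclideanSpace ℝ (Fin n), ‖x‖ ≤ 3 / 4 → φ x = 1)
    (ν : Measure (EuclideanSpace ℝ (Fin n))) [IsFiniteMeasure ν] (z : EuclideanSpace ℝ (Fin n))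
    {r : ℝ} (hr : 0 < r) :
    ∫ y, φ ((3 * r)⁻¹ • (y - z)) ∂ν ≤ (ν (closedBall z (3 * r))).toReal := by
  have h1 : (ν (closedBall z (3 * r))).toReal
      = ∫ y, (closedBall z (3 * r)).indicator (fun _ => (1:ℝ)) y ∂ν := by
    rw [MeasureTheory.integral_indicator_const _ measurableSet_closedBall, smul_eq_mul, mul_one, measureReal_def]
  rw [h1]
  refine integral_mono (g_integrable hφcont hφpos (phi_le_one hφmono hφone) ν z r)
    ((integrable_const (1:ℝ)).indicator measurableSet_closedBall) ?_
  intro y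
  by_cases hy : y ∈ closedBall z (3 * r)
  · simp only [indicator_of_mem hy]
    exact phi_le_one hφmono hφone _
  · simp only [indicator_of_notMem hy]
    rw [phi_eq_zero hr hφsupp hy]

end Int

lemma ennreal_eq_zero_of_forall {a : ℝ≥0∞} (h : ∀ ε : ℝ, 0 < ε → a ≤ ENNReal.ofReal ε) :
    a = 0 := by
  by_contra ha
  have hfin : a < ∞ := lt_of_le_of_lt (h 1 one_pos) ENNReal.ofReal_lt_top
  have hpos : 0 < a.toReal := ENNReal.toReal_pos ha hfin.ne
  have h2 := h (a.toReal / 2) (by linarith)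
  have h3 : a.toReal ≤ a.toReal / 2 := by
    calc a.toReal ≤ (ENNReal.ofReal (a.toReal / 2)).toReal :=
          ENNReal.toReal_mono (by simp) h2
      _ = a.toReal / 2 := ENNReal.toReal_ofReal (by linarith)
  linarith

section RegNull
variable {X : Type*} [MetricSpace X] [MeasurableSpace X] [BorelSpace X]

lemma regular_null (lam : Measure X) [IsFiniteMeasure lam] {α : ℝ} (hα : 0 < α)
    {M : ℝ} (hM : 0 < M) (E : Set X) (hE : μH[α] E = 0) :
    lam {x | x ∈ E ∧ ∀ s : ℝ, 0 < s → s ≤ 1 / M →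
      lam (Metric.closedBall x s) ≤ ENNReal.ofReal (M * s ^ α)} = 0 := by
  set A := {x | x ∈ E ∧ ∀ s : ℝ, 0 < s → s ≤ 1 / M →
      lam (Metric.closedBall x s) ≤ ENNReal.ofReal (M * s ^ α)} with hA
  -- singletons of A are null
  have hsingle : ∀ x ∈ A, lam {x} = 0 := by
    intro x hx
    apply ennreal_eq_zero_of_forall
    intro ε hε
    set s := min (1 / M) ((ε / M) ^ α⁻¹) with hs
    have hs1 : 0 < (ε / M) ^ α⁻¹ := Real.rpow_pos_of_pos (by positivity) _
    have hspos : 0 < s := lt_min (by positivity) hs1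
    have hsα : s ^ α ≤ ε / M := by
      calc s ^ α ≤ ((ε / M) ^ α⁻¹) ^ α :=
            Real.rpow_le_rpow hspos.le (min_le_right _ _) hα.le
        _ = ε / M := Real.rpow_inv_rpow (by positivity) hα.ne'
    calc lam {x} ≤ lam (Metric.closedBall x s) :=
          measure_mono (by simp [Metric.mem_closedBall, hspos.le])
      _ ≤ ENNReal.ofReal (M * s ^ α) := hx.2 s hspos (min_le_left _ _)
      _ ≤ ENNReal.ofReal ε := by
          apply ENNReal.ofReal_le_ofReal
          rw [← le_div_iff₀' hM]
          exact hsα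
  have hAH : μH[α] A = 0 :=
    le_antisymm (le_trans (measure_mono (fun x hx => hx.1)) hE.le) (zero_le)
  apply ennreal_eq_zero_of_forall
  intro ε hε
  -- extract a cover
  rw [MeasureTheory.Measure.hausdorffMeasure_apply] at hAH
  have h1 : (⨅ (t : ℕ → Set X) (_ : A ⊆ ⋃ n, t n)
      (_ : ∀ n, EMetric.diam (t n) ≤ ENNReal.ofReal (1 / M)),
      ∑' n, ⨆ _ : (t n).Nonempty, EMetric.diam (t n) ^ α) = 0 := by
    refine le_antisymm ?_ (zero_le)
    rw [← hAH]
    exact le_iSup₂ (f := fun r (_ : 0 < r) => ⨅ (t : ℕ → Set X) (_ : A ⊆ ⋃ n, t n)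
      (_ : ∀ n, EMetric.diam (t n) ≤ r),
      ∑' n, ⨆ _ : (t n).Nonempty, EMetric.diam (t n) ^ α)
      (ENNReal.ofReal (1 / M)) (by simp [hM])
  have h2 : (⨅ (t : ℕ → Set X) (_ : A ⊆ ⋃ n, t n)
      (_ : ∀ n, EMetric.diam (t n) ≤ ENNReal.ofReal (1 / M)),
      ∑' n, ⨆ _ : (t n).Nonempty, EMetric.diam (t n) ^ α)
      < ENNReal.ofReal (ε / (M + 1)) := by
    rw [h1]; simp [hε, hM]; positivity
  simp only [iInf_lt_iff] at h2
  obtain ⟨t, hcover, hsmall, hsum⟩ := h2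
  -- estimate
  have key : ∀ n : ℕ, lam (t n ∩ A) ≤
      ENNReal.ofReal M * ⨆ _ : (t n).Nonempty, EMetric.diam (t n) ^ α := by
    intro n
    rcases (t n ∩ A).eq_empty_or_nonempty with hemp | ⟨x, hxt, hxA⟩
    · simp [hemp]
    · have hne : (t n).Nonempty := ⟨x, hxt⟩
      have hdfin : EMetric.diam (t n) < ∞ :=
        lt_of_le_of_lt (hsmall n) ENNReal.ofReal_lt_top
      set d := (EMetric.diam (t n)).toReal with hd
      have hdle : d ≤ 1 / M := by
        calc d ≤ (ENNReal.ofReal (1 / M)).toReal := ENNReal.toReal_mono (by simp) (hsmall n)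
          _ = 1 / M := ENNReal.toReal_ofReal (by positivity)
      have hsub : t n ⊆ Metric.closedBall x d := by
        intro y hy
        rw [Metric.mem_closedBall, dist_edist]
        exact ENNReal.toReal_mono hdfin.ne (EMetric.edist_le_diam_of_mem hy hxt)
      rcases eq_or_lt_of_le (ENNReal.toReal_nonneg : (0:ℝ) ≤ d) with hd0 | hd0
      · -- diam zero : subset of singleton
        have : t n ⊆ {x} := by
          intro y hy
          have h5 := Metric.mem_closedBall.1 (hsub hy)
          have h6 : dist y x ≤ 0 := le_of_le_of_eq h5 hd0.symm
          simp only [mem_singleton_iff]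
          exact dist_le_zero.1 h6
        calc lam (t n ∩ A) ≤ lam {x} := measure_mono (this.trans' inter_subset_left)
          _ = 0 := hsingle x hxA
          _ ≤ _ := zero_le
      · have hball := hxA.2 d hd0 hdle
        calc lam (t n ∩ A) ≤ lam (Metric.closedBall x d) :=
              measure_mono (hsub.trans' inter_subset_left)
          _ ≤ ENNReal.ofReal (M * d ^ α) := hball
          _ = ENNReal.ofReal M * ENNReal.ofReal (d ^ α) := by
              rw [ENNReal.ofReal_mul hM.le]
          _ = ENNReal.ofReal M * EMetric.diam (t n) ^ α := by
              rw [← ENNReal.ofReal_rpow_of_pos hd0, ENNReal.ofReal_toReal hdfin.ne]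
          _ ≤ _ := by
              rw [iSup_pos hne]
  calc lam A ≤ ∑' n, lam (t n ∩ A) := by
        refine le_trans (measure_mono ?_) (measure_iUnion_le _)
        intro x hx
        obtain ⟨n, hn⟩ := mem_iUnion.1 (hcover hx)
        · exact mem_iUnion.2 ⟨n, hn, hx⟩
    _ ≤ ∑' n, ENNReal.ofReal M * ⨆ _ : (t n).Nonempty, EMetric.diam (t n) ^ α :=
        ENNReal.tsum_le_tsum key
    _ = ENNReal.ofReal M * ∑' n, ⨆ _ : (t n).Nonempty, EMetric.diam (t n) ^ α :=
        ENNReal.tsum_mul_left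
    _ ≤ ENNReal.ofReal M * ENNReal.ofReal (ε / (M + 1)) := by
        exact mul_le_mul_right hsum.le _
    _ ≤ ENNReal.ofReal ε := by
        rw [← ENNReal.ofReal_mul hM.le]
        apply ENNReal.ofReal_le_ofReal
        have h4 : M * (ε / (M + 1)) = M * ε / (M + 1) := by ring
        rw [h4, div_le_iff₀ (by linarith)]
        nlinarith

end RegNull

section Dich
variable {X : Type*} [MetricSpace X] [MeasurableSpace X]

lemma dichotomy (lam : Measure X) [IsFiniteMeasure lam] {α T σ : ℝ}
    (hα : 0 < α) (hT : 0 < T) (hσ : 0 < σ) (x : X)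
    (h : ∀ r : ℝ, 0 < r → r ≤ σ →
      ¬(lam (closedBall x (3 * r)) ≤
          ENNReal.ofReal ((4/3) ^ α) * lam (closedBall x (9/4 * r)) ∧
        ENNReal.ofReal (T * r ^ α) ≤ lam (closedBall x (9/4 * r)))) :
    ∃ M : ℝ, 0 < M ∧ ∃ s₀ : ℝ, 0 < s₀ ∧ ∀ s : ℝ, 0 < s → s ≤ s₀ →
      lam (closedBall x s) ≤ ENNReal.ofReal (M * s ^ α) := by
  set r : ℕ → ℝ := fun k => (3/4 : ℝ)^k * σ with hr
  have hrpos : ∀ k, 0 < r k := fun k => by positivity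
  have hrsucc : ∀ k, r (k+1) = (3/4) * r k := by
    intro k; simp only [hr, pow_succ]; ring
  have hrball : ∀ k, (9:ℝ)/4 * r k = 3 * r (k+1) := by
    intro k; rw [hrsucc]; ring
  have hrle : ∀ k, r k ≤ σ := by
    intro k
    have : (3/4:ℝ)^k ≤ 1 := pow_le_one₀ (by norm_num) (by norm_num)
    calc r k = (3/4:ℝ)^k * σ := rfl
      _ ≤ 1 * σ := by nlinarith
      _ = σ := one_mul σ
  set b : ℕ → ℝ≥0∞ := fun k => lam (closedBall x (3 * r k)) with hb
  have hKpos : (0:ℝ) < (4/3) ^ α := Real.rpow_pos_of_pos (by norm_num) α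
  have hr1 : r 1 = 3/4 * σ := by simp [hr]
  have hr1pos : (0:ℝ) < (3/4 * σ) ^ α := Real.rpow_pos_of_pos (by positivity) α
  set M₀ : ℝ := max ((lam univ).toReal / (3/4 * σ) ^ α) (T * (4/3) ^ α) with hM₀
  have hM₀pos : 0 < M₀ := lt_max_of_lt_right (by positivity)
  have claim : ∀ j : ℕ, b (j+1) ≤ ENNReal.ofReal (M₀ * (r (j+1)) ^ α) := by
    intro j
    induction j with
    | zero =>
        calc b 1 ≤ lam univ := measure_mono (subset_univ _)
          _ = ENNReal.ofReal ((lam univ).toReal) :=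
              (ENNReal.ofReal_toReal (measure_ne_top _ _)).symm
          _ ≤ ENNReal.ofReal (M₀ * (r 1) ^ α) := by
              apply ENNReal.ofReal_le_ofReal
              rw [hr1]
              calc (lam univ).toReal
                  = ((lam univ).toReal / (3/4 * σ) ^ α) * (3/4 * σ) ^ α := by
                    field_simp
                _ ≤ M₀ * (3/4 * σ) ^ α := by
                    apply mul_le_mul_of_nonneg_right (le_max_left _ _) hr1pos.le
    | succ j ih =>
        have hcase := h (r (j+1)) (hrpos _) (hrle _)
        rw [not_and_or] at hcase
        have ha : lam (closedBall x (9/4 * r (j+1))) = b (j+2) := by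
          rw [hrball]
        rcases hcase with hA | hB
        · rw [not_le] at hA
          rw [ha] at hA
          have h2 : ENNReal.ofReal ((4/3) ^ α) * b (j+2)
              ≤ ENNReal.ofReal (M₀ * (r (j+1)) ^ α) := le_trans hA.le ih
          have h3 : b (j+2) ≤ ENNReal.ofReal (((4/3) ^ α)⁻¹ * (M₀ * (r (j+1)) ^ α)) := by
            rw [ENNReal.ofReal_mul (by positivity)]
            rw [ENNReal.ofReal_inv_of_pos hKpos]
            calc b (j+2)
                = (ENNReal.ofReal ((4/3) ^ α))⁻¹ * (ENNReal.ofReal ((4/3) ^ α) * b (j+2)) := by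
                  rw [← mul_assoc, ENNReal.inv_mul_cancel (by simp [hKpos]) ENNReal.ofReal_ne_top,
                    one_mul]
              _ ≤ _ := mul_le_mul_right h2 _
          refine h3.trans (ENNReal.ofReal_le_ofReal (le_of_eq ?_))
          rw [hrsucc (j+1), Real.mul_rpow (by norm_num) (hrpos _).le]
          rw [show ((3:ℝ)/4) ^ α = ((4/3:ℝ) ^ α)⁻¹ by
            rw [← Real.inv_rpow (by norm_num)]; norm_num]
          ring
        · rw [not_le, ha] at hB
          refine hB.le.trans (ENNReal.ofReal_le_ofReal ?_)
          have : r (j+1) = (4/3) * r (j+2) := by rw [hrsucc (j+1)]; ring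
          rw [this, Real.mul_rpow (by norm_num) (hrpos _).le]
          calc T * ((4/3:ℝ) ^ α * (r (j+2)) ^ α) = (T * (4/3) ^ α) * (r (j+2)) ^ α := by ring
            _ ≤ M₀ * (r (j+2)) ^ α := by
                apply mul_le_mul_of_nonneg_right (le_max_right _ _)
                positivity
  refine ⟨M₀, hM₀pos, 3 * r 1, by positivity, ?_⟩
  intro s hs hs0
  have hex : ∃ m, 3 * r (m + 2) < s := by
    obtain ⟨m, hm⟩ := exists_pow_lt_of_lt_one (show (0:ℝ) < s / (3 * σ) by positivity)
      (show (3/4:ℝ) < 1 by norm_num)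
    refine ⟨m, ?_⟩
    have h1 : (3/4:ℝ)^(m+2) ≤ (3/4:ℝ)^m :=
      pow_le_pow_of_le_one (by norm_num) (by norm_num) (by omega)
    have h2 : 3 * r (m+2) = 3 * σ * (3/4:ℝ)^(m+2) := by simp [hr]; ring
    rw [h2]
    calc 3 * σ * (3/4:ℝ)^(m+2) ≤ 3 * σ * (3/4:ℝ)^m := by nlinarith
      _ < 3 * σ * (s / (3*σ)) := by nlinarith
      _ = s := by field_simp
  set k := Nat.find hex with hk
  have hspec : 3 * r (k + 2) < s := Nat.find_spec hex
  have hsle : s ≤ 3 * r (k + 1) := by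
    rcases Nat.eq_zero_or_pos k with h0 | h0
    · rw [h0]; exact hs0
    · have := Nat.find_min hex (m := k - 1) (by omega)
      rw [not_lt] at this
      have hke : k - 1 + 2 = k + 1 := by omega
      rwa [hke] at this
  have hrjs : r (k+1) ≤ s := by
    have h4 : r (k+1) = (4/3) * r (k+2) := by rw [hrsucc (k+1)]; ring
    nlinarith [hrpos (k+2)]
  calc lam (closedBall x s) ≤ b (k+1) := by
        apply measure_mono
        exact closedBall_subset_closedBall hsle
    _ ≤ ENNReal.ofReal (M₀ * (r (k+1)) ^ α) := claim k
    _ ≤ ENNReal.ofReal (M₀ * s ^ α) := by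
        apply ENNReal.ofReal_le_ofReal
        apply mul_le_mul_of_nonneg_left _ hM₀pos.le
        exact Real.rpow_le_rpow (hrpos _).le hrjs hα.le

end Dich

section Main
variable {n : ℕ}
local notation "X" => EuclideanSpace ℝ (Fin n)

lemma main_aux (φ : EuclideanSpace ℝ (Fin n) → ℝ)
    (hφcont : Continuous φ) (hφsupp : tsupport φ ⊆ Metric.closedBall 0 1)
    (hφpos : ∀ x, 0 ≤ φ x)
    (hφmono : ∀ x y : EuclideanSpace ℝ (Fin n), ‖x‖ ≤ ‖y‖ → φ y ≤ φ x)
    (hφone : ∀ x : EuclideanSpace ℝ (Fin n), ‖x‖ ≤ 3 / 4 → φ x = 1)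
    {α β : ℝ} (hα : 0 < α) (hβ : 0 < β)
    (p q : Measure (EuclideanSpace ℝ (Fin n))) [IsFiniteMeasure p] [IsFiniteMeasure q]
    (C : ℝ)
    (hI : ∀ (N : ℕ) (z : Fin N → EuclideanSpace ℝ (Fin n)) (r : Fin N → ℝ),
      (∀ j, 0 < r j) →
      (∀ j k, j ≠ k → Disjoint (closedBall (z j) (3 * r j)) (closedBall (z k) (3 * r k))) →
      ∑ j, |(∫ y, φ ((3 * r j)⁻¹ • (y - z j)) ∂p) - ∫ y, φ ((3 * r j)⁻¹ • (y - z j)) ∂q|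
        ≤ C * (∑ j, r j ^ α) ^ β)
    (E : Set (EuclideanSpace ℝ (Fin n))) (hE : μH[α] E = 0) (hqE : q E = 0) :
    p E = 0 := by
  set lam : Measure (EuclideanSpace ℝ (Fin n)) := p + q with hlam
  have : IsFiniteMeasure lam := by rw [hlam]; infer_instance
  -- bad sets
  set A : ℕ → Set (EuclideanSpace ℝ (Fin n)) := fun M =>
    {x | x ∈ E ∧ ∀ s : ℝ, 0 < s → s ≤ 1 / ((M:ℝ)+1) →
      lam (Metric.closedBall x s) ≤ ENNReal.ofReal (((M:ℝ)+1) * s ^ α)} with hA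
  have hAnull : ∀ M : ℕ, lam (A M) = 0 := by
    intro M
    exact regular_null lam hα (M := (M:ℝ)+1) (by positivity) E hE
  set G : Set (EuclideanSpace ℝ (Fin n)) := E \ ⋃ M : ℕ, A M with hG
  have hEG : lam (E \ G) = 0 := by
    have h1 : E \ G ⊆ ⋃ M : ℕ, A M := by
      intro x hx
      rcases hx with ⟨hxE, hxG⟩
      by_contra hxn
      exact hxG ⟨hxE, hxn⟩
    refine le_antisymm (le_trans (measure_mono h1) ?_) (zero_le)
    calc lam (⋃ M : ℕ, A M) ≤ ∑' M : ℕ, lam (A M) := measure_iUnion_le _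
      _ = 0 := by simp [hAnull]
  -- goodness of points of G
  have hgood : ∀ T : ℝ, 0 < T → ∀ x ∈ G, ∀ σ : ℝ, 0 < σ → ∃ r : ℝ, 0 < r ∧ r ≤ σ ∧
      lam (closedBall x (3 * r)) ≤
        ENNReal.ofReal ((4/3) ^ α) * lam (closedBall x (9/4 * r)) ∧
      ENNReal.ofReal (T * r ^ α) ≤ lam (closedBall x (9/4 * r)) := by
    intro T hT x hx σ hσ
    by_contra hcon
    rw [not_exists] at hcon
    have hdich := dichotomy lam hα hT hσ x (fun r h1 h2 hP => hcon r ⟨h1, h2, hP⟩)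
    obtain ⟨M₁, hM₁, s₀, hs₀, hreg⟩ := hdich
    obtain ⟨M, hM⟩ := exists_nat_ge (max M₁ (1/s₀))
    have hxA : x ∈ A M := by
      refine ⟨hx.1, ?_⟩
      intro s hs1 hs2
      have hMM₁ : M₁ ≤ (M:ℝ) + 1 := le_trans (le_max_left _ _) (by linarith)
      have hs3 : s ≤ s₀ := by
        have h4 : 1/s₀ ≤ (M:ℝ) := le_trans (le_max_right _ _) hM
        have h5 : 1/((M:ℝ)+1) ≤ s₀ := by
          rw [div_le_iff₀ (by positivity)]
          rw [one_div] at h4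
          calc (1:ℝ) = s₀ * s₀⁻¹ := by field_simp
            _ ≤ s₀ * ((M:ℝ)+1) := by
                apply mul_le_mul_of_nonneg_left _ hs₀.le
                linarith
        linarith
      calc lam (closedBall x s) ≤ ENNReal.ofReal (M₁ * s ^ α) := hreg s hs1 hs3
        _ ≤ ENNReal.ofReal (((M:ℝ)+1) * s ^ α) := by
            apply ENNReal.ofReal_le_ofReal
            apply mul_le_mul_of_nonneg_right hMM₁
            positivity
    exact hx.2 (mem_iUnion.2 ⟨M, hxA⟩)
  -- main estimate
  have hLG : ∀ ε : ℝ, 0 < ε → lam G ≤ ENNReal.ofReal ε := by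
    intro ε hε
    set K : ℝ := (4/3) ^ α with hKdef
    have hK : 0 < K := Real.rpow_pos_of_pos (by norm_num) α
    set Cm : ℝ := max C 0 with hCm
    have hCm0 : 0 ≤ Cm := le_max_right _ _
    set δ₀ : ℝ := min 1 ((ε / K / 2 / (Cm + 1)) ^ β⁻¹) with hδ₀def
    have hδ₀ : 0 < δ₀ := lt_min one_pos (Real.rpow_pos_of_pos (by positivity) _)
    have hδβ : Cm * δ₀ ^ β ≤ ε / K / 2 := by
      have h1 : δ₀ ^ β ≤ ε / K / 2 / (Cm + 1) := by
        calc δ₀ ^ β ≤ ((ε / K / 2 / (Cm + 1)) ^ β⁻¹) ^ β :=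
              Real.rpow_le_rpow hδ₀.le (min_le_right _ _) hβ.le
          _ = ε / K / 2 / (Cm + 1) := Real.rpow_inv_rpow (by positivity) hβ.ne'
      have h2 : 0 ≤ δ₀ ^ β := (Real.rpow_pos_of_pos hδ₀ β).le
      have h3 : Cm * δ₀ ^ β ≤ Cm * (ε / K / 2 / (Cm + 1)) :=
        mul_le_mul_of_nonneg_left h1 hCm0
      have h4 : Cm * (ε / K / 2 / (Cm + 1)) ≤ ε / K / 2 := by
        rw [mul_div_assoc']
        rw [div_le_iff₀ (by positivity)]
        have h5 : 0 ≤ ε / K / 2 := by positivity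
        nlinarith
      linarith
    set η : ℝ := ε / K / 4 with hηdef
    have hη : 0 < η := by positivity
    rcases eq_or_ne (lam univ) 0 with hU0 | hU0
    · calc lam G ≤ lam univ := measure_mono (subset_univ _)
        _ = 0 := hU0
        _ ≤ ENNReal.ofReal ε := zero_le
    set Lr : ℝ := (lam univ).toReal with hLr
    have hLrpos : 0 < Lr := ENNReal.toReal_pos hU0 (measure_ne_top _ _)
    set T : ℝ := Lr / δ₀ with hT
    have hTpos : 0 < T := by positivity
    -- open set U around G with small q measure
    have hqG : q G = 0 :=
      le_antisymm ((measure_mono (fun x hx => hx.1)).trans hqE.le) (zero_le)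
    obtain ⟨U, hGU, hUopen, hUq⟩ := Set.exists_isOpen_lt_of_lt G (ENNReal.ofReal η)
      (by rw [hqG]; simp [hη])
    -- admissible radii
    set f : EuclideanSpace ℝ (Fin n) → Set ℝ := fun x => {u | 0 < u ∧ closedBall x u ⊆ U ∧
      lam (closedBall x u) ≤ ENNReal.ofReal K * lam (closedBall x (3/4 * u)) ∧
      ENNReal.ofReal (T * (u/3) ^ α) ≤ lam (closedBall x (3/4 * u))} with hf
    have hfx : ∀ x ∈ G, ∀ δ : ℝ, 0 < δ → (f x ∩ Set.Ioo 0 δ).Nonempty := by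
      intro x hx δ hδ
      obtain ⟨ρ, hρ, hρU⟩ := Metric.isOpen_iff.1 hUopen x (hGU hx)
      obtain ⟨r, hr0, hrσ, hcond1, hcond2⟩ := hgood T hTpos x hx (min (δ/6) (ρ/6))
        (by positivity)
      refine ⟨3 * r, ⟨by positivity, ?_, ?_, ?_⟩, by positivity, ?_⟩
      · have h6 : 3 * r < ρ := by
          have := min_le_right (δ/6) (ρ/6)
          nlinarith [hrσ.trans this]
        exact (closedBall_subset_ball h6).trans hρU
      · rw [show (3:ℝ)/4 * (3 * r) = 9/4 * r by ring]
        exact hcond1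
      · rw [show (3:ℝ) * r / 3 = r by ring, show (3:ℝ)/4 * (3 * r) = 9/4 * r by ring]
        exact hcond2
      · have := min_le_left (δ/6) (ρ/6)
        nlinarith [hrσ.trans this]
    obtain ⟨t, rf, t_count, t_sub, h_mem, h_ae, h_disj⟩ :=
      Besicovitch.exists_disjoint_closedBall_covering_ae lam f G hfx (fun _ => 1)
        (fun x _ => one_pos)
    have hrf : ∀ x ∈ t, 0 < rf x ∧ closedBall x (rf x) ⊆ U ∧
        lam (closedBall x (rf x)) ≤ ENNReal.ofReal K * lam (closedBall x (3/4 * rf x)) ∧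
        ENNReal.ofReal (T * (rf x/3) ^ α) ≤ lam (closedBall x (3/4 * rf x)) := by
      intro x hx
      have h7 := (h_mem x hx).1
      exact ⟨h7.1, h7.2.1, h7.2.2.1, h7.2.2.2⟩
    -- the integrals
    set I : EuclideanSpace ℝ (Fin n) → ℝ := fun x =>
      (∫ y, φ ((rf x)⁻¹ • (y - x)) ∂p) - ∫ y, φ ((rf x)⁻¹ • (y - x)) ∂q with hIdef
    -- per-ball estimate for p of the inner ball
    have hball : ∀ x ∈ t, p (closedBall x (3/4 * rf x)) ≤
        ENNReal.ofReal |I x| + q (closedBall x (rf x)) := by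
      intro x hx
      obtain ⟨hu0, -, -, -⟩ := hrf x hx
      have hr0 : 0 < rf x / 3 := by positivity
      have e1 := int_lb (φ := φ) hφcont hφpos hφmono hφone p x hr0
      have e2 := int_ub (φ := φ) hφcont hφpos hφsupp hφmono hφone q x hr0
      rw [show 3 * (rf x / 3) = rf x by ring] at e1 e2
      rw [show (9:ℝ)/4 * (rf x / 3) = 3/4 * rf x by ring] at e1
      have e3 : (p (closedBall x (3/4 * rf x))).toReal ≤ |I x| +
          (q (closedBall x (rf x))).toReal := by
        have e4 : I x ≥ (p (closedBall x (3/4 * rf x))).toReal -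
            (q (closedBall x (rf x))).toReal := by
          rw [hIdef]
          exact sub_le_sub e1 e2
        calc (p (closedBall x (3/4 * rf x))).toReal
            ≤ I x + (q (closedBall x (rf x))).toReal := by linarith
          _ ≤ |I x| + (q (closedBall x (rf x))).toReal := by
              have := le_abs_self (I x); linarith
      calc p (closedBall x (3/4 * rf x))
          = ENNReal.ofReal ((p (closedBall x (3/4 * rf x))).toReal) :=
            (ENNReal.ofReal_toReal (measure_ne_top _ _)).symm
        _ ≤ ENNReal.ofReal (|I x| + (q (closedBall x (rf x))).toReal) :=
            ENNReal.ofReal_le_ofReal e3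
        _ ≤ ENNReal.ofReal |I x| + ENNReal.ofReal ((q (closedBall x (rf x))).toReal) :=
            ENNReal.ofReal_add_le
        _ = ENNReal.ofReal |I x| + q (closedBall x (rf x)) := by
            rw [ENNReal.ofReal_toReal (measure_ne_top _ _)]
    -- q of the union of balls is small
    have hqU : ∑' x : t, q (closedBall (x:EuclideanSpace ℝ (Fin n)) (rf x)) ≤
        ENNReal.ofReal η := by
      rw [← measure_biUnion t_count h_disj (fun b _ => measurableSet_closedBall)]
      refine le_trans (measure_mono ?_) hUq.le
      refine iUnion₂_subset ?_
      intro x hx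
      exact (hrf x hx).2.1
    -- sum of |I| over finite subfamilies
    have hIsum : ∑' x : t, ENNReal.ofReal |I x| ≤ ENNReal.ofReal (Cm * δ₀ ^ β) := by
      rw [ENNReal.tsum_eq_iSup_sum]
      refine iSup_le ?_
      intro F
      -- finite subfamily
      set N := F.card with hN
      set e : Fin F.card ≃ ↥F := F.equivFin.symm with he
      set z : Fin F.card → EuclideanSpace ℝ (Fin n) := fun j => ((e j : ↥t) : _) with hz
      set r : Fin F.card → ℝ := fun j => rf (z j) / 3 with hrdef
      have hzt : ∀ j, z j ∈ t := fun j => (e j).1.2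
      have hrpos : ∀ j, 0 < r j := fun j => by
        have := (hrf _ (hzt j)).1
        rw [hrdef]; positivity
      have h3r : ∀ j, 3 * r j = rf (z j) := fun j => by rw [hrdef]; ring
      have hne : ∀ j k, j ≠ k → z j ≠ z k := by
        intro j k hjk hzz
        apply hjk
        apply e.injective
        apply Subtype.ext
        apply Subtype.ext
        exact hzz
      have hd : ∀ j k, j ≠ k → Disjoint (closedBall (z j) (3 * r j))
          (closedBall (z k) (3 * r k)) := by
        intro j k hjk
        rw [h3r j, h3r k]
        exact h_disj (hzt j) (hzt k) (hne j k hjk)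
      have key := hI F.card z r hrpos hd
      simp only [h3r] at key
      -- bound the sum of r^alpha
      have hpair : Pairwise fun j k => Disjoint (closedBall (z j) (rf (z j)))
          (closedBall (z k) (rf (z k))) := by
        intro j k hjk
        exact h_disj (hzt j) (hzt k) (hne j k hjk)
      have hsum1 : ∑ j, lam (closedBall (z j) (rf (z j))) ≤ lam univ := by
        rw [← tsum_fintype (L := SummationFilter.unconditional _), ← measure_iUnion hpair (fun j => measurableSet_closedBall)]
        exact measure_mono (subset_univ _)
      have hsum2 : ENNReal.ofReal (∑ j, T * r j ^ α) ≤ lam univ := by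
        rw [ENNReal.ofReal_sum_of_nonneg (fun j _ => mul_nonneg hTpos.le (Real.rpow_nonneg (hrpos j).le _))]
        refine le_trans (Finset.sum_le_sum ?_) hsum1
        intro j _
        refine le_trans ((hrf _ (hzt j)).2.2.2) (measure_mono ?_)
        apply closedBall_subset_closedBall
        have := (hrf _ (hzt j)).1
        linarith
      have hsum3 : ∑ j, T * r j ^ α ≤ Lr := by
        have h8 : ENNReal.ofReal (∑ j, T * r j ^ α) ≤ ENNReal.ofReal Lr := by
          rw [hLr, ENNReal.ofReal_toReal (measure_ne_top _ _)]
          exact hsum2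
        exact (ENNReal.ofReal_le_ofReal_iff hLrpos.le).1 h8
      have hrα : ∑ j, r j ^ α ≤ δ₀ := by
        rw [← Finset.mul_sum] at hsum3
        have h9 : Lr / T = δ₀ := by
          rw [hT]
          field_simp
        rw [← h9]
        rw [le_div_iff₀ hTpos]
        linarith
      -- conclude
      rw [← ENNReal.ofReal_sum_of_nonneg (fun i _ => abs_nonneg _)]
      apply ENNReal.ofReal_le_ofReal
      have hsum_eq : ∑ i ∈ F, |I ↑i| = ∑ j, |I (z j)| := by
        rw [← Finset.sum_coe_sort F (fun i => |I ↑i|)]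
        exact (Equiv.sum_comp e (fun i : ↥F => |I ↑i|)).symm
      rw [hsum_eq]
      have hkey2 : ∑ j, |I (z j)| ≤ C * (∑ j, r j ^ α) ^ β := key
      have hpow0 : (0:ℝ) ≤ (∑ j, r j ^ α) ^ β :=
        Real.rpow_nonneg (Finset.sum_nonneg fun j _ => Real.rpow_nonneg (hrpos j).le _) _
      calc ∑ j, |I (z j)| ≤ C * (∑ j, r j ^ α) ^ β := hkey2
        _ ≤ Cm * (∑ j, r j ^ α) ^ β := mul_le_mul_of_nonneg_right (le_max_left _ _) hpow0
        _ ≤ Cm * δ₀ ^ β := by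
            apply mul_le_mul_of_nonneg_left _ hCm0
            exact Real.rpow_le_rpow
              (Finset.sum_nonneg fun j _ => Real.rpow_nonneg (hrpos j).le _) hrα hβ.le

    -- put everything together
    have hchain : lam G ≤ ENNReal.ofReal K *
        ((ENNReal.ofReal (Cm * δ₀ ^ β) + ENNReal.ofReal η) + ENNReal.ofReal η) := by

      have hsplit : ∀ x : t, lam (closedBall (x : EuclideanSpace ℝ (Fin n)) (3/4 * rf x))
          = p (closedBall (x : EuclideanSpace ℝ (Fin n)) (3/4 * rf x))
            + q (closedBall (x : EuclideanSpace ℝ (Fin n)) (3/4 * rf x)) := by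
        intro x
        rw [hlam, Measure.add_apply]
      have hinner : ∑' x : t, lam (closedBall (x : EuclideanSpace ℝ (Fin n)) (3/4 * rf x))
          ≤ (ENNReal.ofReal (Cm * δ₀ ^ β) + ENNReal.ofReal η) + ENNReal.ofReal η := by
        calc ∑' x : t, lam (closedBall (x : EuclideanSpace ℝ (Fin n)) (3/4 * rf x))
            = (∑' x : t, p (closedBall (x : EuclideanSpace ℝ (Fin n)) (3/4 * rf x)))
              + ∑' x : t, q (closedBall (x : EuclideanSpace ℝ (Fin n)) (3/4 * rf x)) := by
              rw [← ENNReal.tsum_add]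
              exact tsum_congr hsplit
          _ ≤ ((∑' x : t, ENNReal.ofReal |I ↑x|)
                + ∑' x : t, q (closedBall (x : EuclideanSpace ℝ (Fin n)) (rf x)))
              + ∑' x : t, q (closedBall (x : EuclideanSpace ℝ (Fin n)) (rf x)) := by
              apply add_le_add
              · calc (∑' x : t, p (closedBall (x : EuclideanSpace ℝ (Fin n)) (3/4 * rf x)))
                    ≤ ∑' x : t, (ENNReal.ofReal |I ↑x|
                        + q (closedBall (x : EuclideanSpace ℝ (Fin n)) (rf x))) :=
                      ENNReal.tsum_le_tsum (fun x => hball x x.2)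
                  _ = _ := ENNReal.tsum_add
              · apply ENNReal.tsum_le_tsum
                intro x
                apply measure_mono
                apply closedBall_subset_closedBall
                have := (hrf x x.2).1
                linarith
          _ ≤ (ENNReal.ofReal (Cm * δ₀ ^ β) + ENNReal.ofReal η) + ENNReal.ofReal η := by
              apply add_le_add (add_le_add hIsum hqU) hqU
      calc lam G ≤ lam (G ∩ ⋃ x ∈ t, closedBall x (rf x))
            + lam (G \ ⋃ x ∈ t, closedBall x (rf x)) := measure_le_inter_add_diff _ _ _
        _ = lam (G ∩ ⋃ x ∈ t, closedBall x (rf x)) := by rw [h_ae, add_zero]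
        _ ≤ lam (⋃ x ∈ t, closedBall x (rf x)) := measure_mono inter_subset_right
        _ ≤ ∑' x : t, lam (closedBall (x : EuclideanSpace ℝ (Fin n)) (rf x)) :=
            measure_biUnion_le lam t_count _
        _ ≤ ∑' x : t, ENNReal.ofReal K
              * lam (closedBall (x : EuclideanSpace ℝ (Fin n)) (3/4 * rf x)) :=
            ENNReal.tsum_le_tsum (fun x => (hrf x x.2).2.2.1)
        _ = ENNReal.ofReal K
              * ∑' x : t, lam (closedBall (x : EuclideanSpace ℝ (Fin n)) (3/4 * rf x)) :=
            ENNReal.tsum_mul_left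
        _ ≤ _ := mul_le_mul_right hinner _

    refine hchain.trans ?_
    rw [← ENNReal.ofReal_add (by positivity) hη.le, ← ENNReal.ofReal_add (by positivity) hη.le,
      ← ENNReal.ofReal_mul hK.le]
    apply ENNReal.ofReal_le_ofReal
    have hKη : K * (Cm * δ₀ ^ β + η + η) ≤ K * (ε / K / 2 + ε / K / 4 + ε / K / 4) := by
      apply mul_le_mul_of_nonneg_left _ hK.le
      have := hδβ
      rw [hηdef]
      linarith
    calc K * (Cm * δ₀ ^ β + η + η) ≤ K * (ε / K / 2 + ε / K / 4 + ε / K / 4) := hKη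
      _ = ε := by field_simp; ring

  have hG0 : lam G = 0 := ennreal_eq_zero_of_forall hLG
  have hpE : p E ≤ lam G + lam (E \ G) := by
    calc p E ≤ p (G ∪ (E \ G)) := measure_mono (fun x hx => by
          by_cases hxG : x ∈ G
          · exact Or.inl hxG
          · exact Or.inr ⟨hx, hxG⟩)
      _ ≤ p G + p (E \ G) := measure_union_le _ _
      _ ≤ lam G + lam (E \ G) := by
          apply add_le_add
          · rw [hlam]; exact Measure.le_add_right le_rfl _
          · rw [hlam]; exact Measure.le_add_right le_rfl _
  rw [hG0, hEG, add_zero] at hpE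
  exact le_antisymm hpE (zero_le)

end Main

/-- **A generalization of Frostman's lemma to signed measures.** Let
`φ ∈ C_c^∞(ℝⁿ)` be a nonnegative radial function supported in the unit ball,
nonincreasing in the radius, with `φ = 1` on the ball of radius `3/4`. If a finite
signed Borel measure `μ` satisfies
`∑_j |∫ φ((x_j + y)/(3 r_j)) dμ(y)| ≤ C (∑_j r_j^α)^β`
for every finite collection of balls `B_{r_j}(x_j)` whose triples `B_{3 r_j}(x_j)`
are pairwise disjoint, then `dim μ ≥ α`: `μ F = 0` for every Borel `F` with
`dimH F < α`. -/
theorem frostman_generalization (n : ℕ)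
    (φ : EuclideanSpace ℝ (Fin n) → ℝ)
    (hφsmooth : ContDiff ℝ (⊤ : ℕ∞) φ)
    (hφsupp : tsupport φ ⊆ Metric.closedBall 0 1)
    (hφpos : ∀ x, 0 ≤ φ x)
    (hφradial : ∀ x y : EuclideanSpace ℝ (Fin n), ‖x‖ = ‖y‖ → φ x = φ y)
    (hφmono : ∀ x y : EuclideanSpace ℝ (Fin n), ‖x‖ ≤ ‖y‖ → φ y ≤ φ x)
    (hφone : ∀ x : EuclideanSpace ℝ (Fin n), ‖x‖ ≤ 3 / 4 → φ x = 1)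
    (α β : ℝ) (hα : 0 < α) (hβ : 0 < β)
    (μ : SignedMeasure (EuclideanSpace ℝ (Fin n)))
    (C : ℝ)
    (hμ : ∀ (N : ℕ) (x : Fin N → EuclideanSpace ℝ (Fin n)) (r : Fin N → ℝ),
      (∀ j, 0 < r j) →
      (∀ j k, j ≠ k →
        Disjoint (Metric.ball (x j) (3 * r j)) (Metric.ball (x k) (3 * r k))) →
      ∑ j : Fin N, |sintegral μ (fun y => φ ((3 * r j)⁻¹ • (x j + y)))|
        ≤ C * (∑ j : Fin N, r j ^ α) ^ β)
    (F : Set (EuclideanSpace ℝ (Fin n))) (hF : MeasurableSet F)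
    (hdim : dimH F < ENNReal.ofReal α) :
    μ F = 0 := by
  have hφcont : Continuous φ := hφsmooth.continuous
  set p := μ.toJordanDecomposition.posPart with hp
  set q := μ.toJordanDecomposition.negPart with hq
  -- derived hypothesis with recentered balls
  have hIpq : ∀ (N : ℕ) (z : Fin N → EuclideanSpace ℝ (Fin n)) (r : Fin N → ℝ),
      (∀ j, 0 < r j) →
      (∀ j k, j ≠ k → Disjoint (closedBall (z j) (3 * r j)) (closedBall (z k) (3 * r k))) →
      ∑ j, |(∫ y, φ ((3 * r j)⁻¹ • (y - z j)) ∂p) - ∫ y, φ ((3 * r j)⁻¹ • (y - z j)) ∂q|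
        ≤ C * (∑ j, r j ^ α) ^ β := by
    intro N z r hr hd
    have hb : ∀ (w : EuclideanSpace ℝ (Fin n)) (R : ℝ),
        Metric.ball (-w) R = (fun y : EuclideanSpace ℝ (Fin n) => -y) ⁻¹' (Metric.ball w R) := by
      intro w R
      ext y
      simp only [mem_preimage, Metric.mem_ball, dist_eq_norm, sub_neg_eq_add]
      rw [show -y - w = -(y + w) by abel, norm_neg]
    have hd' : ∀ j k, j ≠ k →
        Disjoint (Metric.ball (-(z j)) (3 * r j)) (Metric.ball (-(z k)) (3 * r k)) := by
      intro j k hjk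
      rw [hb, hb]
      exact Disjoint.preimage _ ((hd j k hjk).mono ball_subset_closedBall ball_subset_closedBall)
    have h1 := hμ N (fun j => -(z j)) r hr hd'
    simpa only [sintegral, neg_add_eq_sub] using h1
  have hIqp : ∀ (N : ℕ) (z : Fin N → EuclideanSpace ℝ (Fin n)) (r : Fin N → ℝ),
      (∀ j, 0 < r j) →
      (∀ j k, j ≠ k → Disjoint (closedBall (z j) (3 * r j)) (closedBall (z k) (3 * r k))) →
      ∑ j, |(∫ y, φ ((3 * r j)⁻¹ • (y - z j)) ∂q) - ∫ y, φ ((3 * r j)⁻¹ • (y - z j)) ∂p|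
        ≤ C * (∑ j, r j ^ α) ^ β := by
    intro N z r hr hd
    calc ∑ j, |(∫ y, φ ((3 * r j)⁻¹ • (y - z j)) ∂q) - ∫ y, φ ((3 * r j)⁻¹ • (y - z j)) ∂p|
        = ∑ j, |(∫ y, φ ((3 * r j)⁻¹ • (y - z j)) ∂p) - ∫ y, φ ((3 * r j)⁻¹ • (y - z j)) ∂q| :=
          Finset.sum_congr rfl (fun j _ => abs_sub_comm _ _)
      _ ≤ C * (∑ j, r j ^ α) ^ β := hIpq N z r hr hd
  -- Hausdorff measure of F vanishes
  have hHF : μH[α] F = 0 := by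
    have h2 : dimH F < ((α.toNNReal : ℝ≥0) : ℝ≥0∞) := by
      rwa [show ((α.toNNReal : ℝ≥0) : ℝ≥0∞) = ENNReal.ofReal α from rfl]
    have h3 := hausdorffMeasure_of_dimH_lt h2
    rwa [Real.coe_toNNReal α hα.le] at h3
  obtain ⟨S, hSmeas, hpS, hqSc⟩ := μ.toJordanDecomposition.mutuallySingular
  have hFsplit : F = (F ∩ Sᶜ) ∪ (F ∩ S) := by
    rw [← inter_union_distrib_left, compl_union_self, inter_univ]
  have h1 : p (F ∩ Sᶜ) = 0 := by
    refine main_aux φ hφcont hφsupp hφpos hφmono hφone hα hβ p q C hIpq (F ∩ Sᶜ) ?_ ?_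
    · exact le_antisymm ((measure_mono inter_subset_left).trans hHF.le) (zero_le)
    · exact le_antisymm ((measure_mono inter_subset_right).trans hqSc.le) (zero_le)
  have h2 : q (F ∩ S) = 0 := by
    refine main_aux φ hφcont hφsupp hφpos hφmono hφone hα hβ q p C hIqp (F ∩ S) ?_ ?_
    · exact le_antisymm ((measure_mono inter_subset_left).trans hHF.le) (zero_le)
    · exact le_antisymm ((measure_mono inter_subset_right).trans hpS.le) (zero_le)
  have hpF : p F = 0 := by
    refine le_antisymm ?_ (zero_le)
    calc p F = p ((F ∩ Sᶜ) ∪ (F ∩ S)) := by rw [← hFsplit]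
      _ ≤ p (F ∩ Sᶜ) + p (F ∩ S) := measure_union_le _ _
      _ ≤ 0 + 0 := add_le_add h1.le ((measure_mono inter_subset_right).trans hpS.le)
      _ = 0 := by simp
  have hqF : q F = 0 := by
    refine le_antisymm ?_ (zero_le)
    calc q F = q ((F ∩ Sᶜ) ∪ (F ∩ S)) := by rw [← hFsplit]
      _ ≤ q (F ∩ Sᶜ) + q (F ∩ S) := measure_union_le _ _
      _ ≤ 0 + 0 := add_le_add ((measure_mono inter_subset_right).trans hqSc.le) h2.le
      _ = 0 := by simp
  have hμF : μ F = (p F).toReal - (q F).toReal := by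
    conv_lhs => rw [← μ.toSignedMeasure_toJordanDecomposition]
    rw [JordanDecomposition.toSignedMeasure, Measure.toSignedMeasure_sub_apply hF, measureReal_def, measureReal_def]
  rw [hμF, hpF, hqF]
  simp
end

section
/- Let μ be a finite signed Borel measure on ℝ^k × ℝ^l and let α > 0. Suppose that μ(I × A) = 0 for every closed rectangular parallelepiped I ⊂ ℝ^k and every Borel set A ⊂ ℝ^l with Hausdorff dimension dimH A < α. Then μ(F) = 0 for every Borel set F ⊂ ℝ^k × ℝ^l with dimH F < α; that is, dim μ ≥ α. -/
open MeasureTheory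

/-- Projection of `ℝ^{k+l}` onto the first `k` coordinates. -/
noncomputable def projFst (k l : ℕ) (x : EuclideanSpace ℝ (Fin (k + l))) :
    EuclideanSpace ℝ (Fin k) :=
  WithLp.toLp 2 (fun i => x (Fin.castAdd l i))

/-- Projection of `ℝ^{k+l}` onto the last `l` coordinates. -/
noncomputable def projSnd (k l : ℕ) (x : EuclideanSpace ℝ (Fin (k + l))) :
    EuclideanSpace ℝ (Fin l) :=
  WithLp.toLp 2 (fun j => x (Fin.natAdd k j))

open Set MeasurableSpace

/-- The "product" sets appearing in the hypothesis. -/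
def prodSet (k l : ℕ) (a b : Fin k → ℝ) (A : Set (EuclideanSpace ℝ (Fin l))) :
    Set (EuclideanSpace ℝ (Fin (k + l))) :=
  {x | (∀ i : Fin k, a i ≤ projFst k l x i ∧ projFst k l x i ≤ b i) ∧ projSnd k l x ∈ A}

/-- The π-system of product sets with measurable second factor. -/
def piSys (k l : ℕ) : Set (Set (EuclideanSpace ℝ (Fin (k + l)))) :=
  {s | ∃ a b A, MeasurableSet A ∧ s = prodSet k l a b A}

lemma measurable_eval {n : ℕ} (j : Fin n) :
    Measurable (fun x : EuclideanSpace ℝ (Fin n) => x j) :=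
  (measurable_pi_apply j).comp (WithLp.measurable_ofLp _ _)

lemma measurable_projSnd (k l : ℕ) : Measurable (projSnd k l) :=
  (WithLp.measurable_toLp _ _).comp
    (measurable_pi_lambda _ (fun _ => (measurable_pi_apply _).comp (WithLp.measurable_ofLp _ _)))

lemma lipschitz_projSnd (k l : ℕ) : LipschitzWith 1 (projSnd k l) := by
  apply LipschitzWith.of_dist_le_mul
  intro x y
  rw [NNReal.coe_one, one_mul, EuclideanSpace.dist_eq, EuclideanSpace.dist_eq]
  apply Real.sqrt_le_sqrt
  rw [Fin.sum_univ_add]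
  exact le_add_of_nonneg_left (Finset.sum_nonneg fun i _ => sq_nonneg _)

lemma prodSet_measurableSet (k l : ℕ) (a b : Fin k → ℝ)
    {A : Set (EuclideanSpace ℝ (Fin l))} (hA : MeasurableSet A) :
    MeasurableSet (prodSet k l a b A) := by
  have h : prodSet k l a b A =
      (⋂ i : Fin k, ({x : EuclideanSpace ℝ (Fin (k + l)) | a i ≤ projFst k l x i} ∩
        {x | projFst k l x i ≤ b i})) ∩ projSnd k l ⁻¹' A := by
    ext x
    simp only [prodSet, mem_setOf_eq, mem_inter_iff, mem_iInter, mem_preimage, forall_and]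
  rw [h]
  refine MeasurableSet.inter (MeasurableSet.iInter fun i => MeasurableSet.inter ?_ ?_)
    (measurable_projSnd k l hA)
  · exact measurableSet_le measurable_const (measurable_eval (Fin.castAdd l i))
  · exact measurableSet_le (measurable_eval (Fin.castAdd l i)) measurable_const

lemma iUnion_prodSet (k l : ℕ) (A : Set (EuclideanSpace ℝ (Fin l))) :
    (⋃ n : ℕ, prodSet k l (fun _ => -(n : ℝ)) (fun _ => (n : ℝ)) A) = projSnd k l ⁻¹' A := by
  ext x
  simp only [mem_iUnion, prodSet, mem_setOf_eq, mem_preimage]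
  constructor
  · rintro ⟨n, _, h2⟩; exact h2
  · intro h
    obtain ⟨n, hn⟩ := exists_nat_ge (∑ i, |projFst k l x i|)
    refine ⟨n, fun i => ?_, h⟩
    have habs : |projFst k l x i| ≤ (n : ℝ) :=
      le_trans (Finset.single_le_sum (f := fun i => |projFst k l x i|)
        (fun j _ => abs_nonneg _) (Finset.mem_univ i)) hn
    exact ⟨neg_le_of_abs_le habs, le_of_abs_le habs⟩

lemma prodSet_mono (k l : ℕ) (A : Set (EuclideanSpace ℝ (Fin l))) :
    Monotone (fun n : ℕ => prodSet k l (fun _ => -(n : ℝ)) (fun _ => (n : ℝ)) A) := by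
  intro m n hmn x hx
  have hmn' : (m : ℝ) ≤ n := by exact_mod_cast hmn
  exact ⟨fun i => ⟨le_trans (neg_le_neg hmn') (hx.1 i).1, le_trans (hx.1 i).2 hmn'⟩, hx.2⟩

lemma isPiSystem_piSys (k l : ℕ) : IsPiSystem (piSys k l) := by
  rintro _ ⟨a, b, A, hA, rfl⟩ _ ⟨a', b', A', hA', rfl⟩ -
  refine ⟨fun i => max (a i) (a' i), fun i => min (b i) (b' i), A ∩ A', hA.inter hA', ?_⟩
  ext x
  simp only [prodSet, mem_inter_iff, mem_setOf_eq, max_le_iff, le_min_iff, forall_and]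
  tauto

lemma gen_piSys (k l : ℕ) :
    (inferInstance : MeasurableSpace (EuclideanSpace ℝ (Fin (k + l)))) =
      generateFrom (piSys k l) := by
  refine le_antisymm ?_ (generateFrom_le ?_)
  · -- every Borel set is generated
    have hsnd : @Measurable (EuclideanSpace ℝ (Fin (k + l))) (EuclideanSpace ℝ (Fin l))
        (generateFrom (piSys k l)) _ (projSnd k l) := by
      intro A hA
      rw [← iUnion_prodSet]
      exact MeasurableSet.iUnion fun n =>
        measurableSet_generateFrom ⟨_, _, _, hA, rfl⟩
    have hcoord : ∀ i : Fin (k + l), @Measurable (EuclideanSpace ℝ (Fin (k + l))) ℝ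
        (generateFrom (piSys k l)) _ (fun x => x i) := by
      intro i
      induction i using Fin.addCases with
      | left i' =>
        apply measurable_of_Iic
        intro c
        have h : (fun x : EuclideanSpace ℝ (Fin (k + l)) => x (Fin.castAdd l i')) ⁻¹' Iic c =
            ⋃ n : ℕ, prodSet k l (fun _ => -(n : ℝ))
              (fun j => if j = i' then c else (n : ℝ)) univ := by
          ext x
          simp only [mem_preimage, mem_Iic, mem_iUnion, prodSet, mem_setOf_eq, mem_univ,
            and_true]
          constructor
          · intro hx
            obtain ⟨n, hn⟩ := exists_nat_ge (∑ i, |projFst k l x i|)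
            refine ⟨n, fun j => ?_⟩
            have habs : |projFst k l x j| ≤ (n : ℝ) :=
              le_trans (Finset.single_le_sum (f := fun i => |projFst k l x i|)
                (fun j _ => abs_nonneg _) (Finset.mem_univ j)) hn
            refine ⟨neg_le_of_abs_le habs, ?_⟩
            by_cases hj : j = i'
            · subst hj; simpa [projFst] using hx
            · simpa [hj] using le_of_abs_le habs
          · rintro ⟨n, hn⟩
            have := (hn i').2
            simpa [projFst] using this
        rw [h]
        exact MeasurableSet.iUnion fun n =>
          measurableSet_generateFrom ⟨_, _, _, MeasurableSet.univ, rfl⟩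
      | right j =>
        exact ((measurable_pi_apply j).comp (WithLp.measurable_ofLp _ _)).comp hsnd
    have e : (inferInstance : MeasurableSpace (EuclideanSpace ℝ (Fin (k + l)))) =
        MeasurableSpace.comap WithLp.ofLp MeasurableSpace.pi := rfl
    rw [e, MeasurableSpace.pi, MeasurableSpace.comap_iSup]
    refine iSup_le fun i => ?_
    rw [MeasurableSpace.comap_comp]
    exact measurable_iff_comap_le.mp (hcoord i)
  · rintro _ ⟨a, b, A, hA, rfl⟩
    exact prodSet_measurableSet k l a b hA

/-- **Slicing lemma.** Let `μ` be a finite signed Borel measure on `ℝ^{k+l}` and `α > 0`.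
If `μ(I × A) = 0` for every closed rectangular parallelepiped `I ⊂ ℝ^k` and every Borel
set `A ⊂ ℝ^l` of Hausdorff dimension `< α`, then `μ F = 0` for every Borel set
`F ⊂ ℝ^{k+l}` with `dimH F < α`, i.e. `dim μ ≥ α`. -/
theorem dim_ge_of_vanishing_on_products (k l : ℕ) (α : ℝ) (hα : 0 < α)
    (μ : SignedMeasure (EuclideanSpace ℝ (Fin (k + l))))
    (hμ : ∀ (a b : Fin k → ℝ) (A : Set (EuclideanSpace ℝ (Fin l))),
      MeasurableSet A → dimH A < ENNReal.ofReal α →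
      μ {x : EuclideanSpace ℝ (Fin (k + l)) |
          (∀ i : Fin k, a i ≤ projFst k l x i ∧ projFst k l x i ≤ b i) ∧
          projSnd k l x ∈ A} = 0)
    (F : Set (EuclideanSpace ℝ (Fin (k + l)))) (hF : MeasurableSet F)
    (hdim : dimH F < ENNReal.ofReal α) :
    μ F = 0 := by
  obtain ⟨r, hr1, hr2⟩ := exists_between hdim
  have hrtop : r ≠ ⊤ := ne_top_of_lt hr2
  set d : NNReal := r.toNNReal with hd
  have hrd : (d : ENNReal) = r := ENNReal.coe_toNNReal hrtop
  -- the projection of F has small dimension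
  have hdimIm : dimH (projSnd k l '' F) < (d : ENNReal) :=
    lt_of_le_of_lt ((lipschitz_projSnd k l).dimH_image_le F) (hrd ▸ hr1)
  have h0 : μH[(d : ℝ)] (projSnd k l '' F) = 0 := hausdorffMeasure_of_dimH_lt hdimIm
  obtain ⟨B, hFB, hBm, hB0⟩ := exists_measurable_superset_of_null h0
  have hdB : dimH B ≤ (d : ENNReal) :=
    dimH_le_of_hausdorffMeasure_ne_top (by rw [hB0]; exact ENNReal.zero_ne_top)
  have hdB' : dimH B < ENNReal.ofReal α := lt_of_le_of_lt (hrd ▸ hdB) hr2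
  set T : Set (EuclideanSpace ℝ (Fin (k + l))) := projSnd k l ⁻¹' B with hT
  have hTm : MeasurableSet T := measurable_projSnd k l hBm
  have hFT : F ⊆ T := fun x hx => hFB (mem_image_of_mem _ hx)
  set ν : SignedMeasure (EuclideanSpace ℝ (Fin (k + l))) := μ.restrict T with hνdef
  -- ν vanishes on the π-system
  have hν0 : ∀ (a b : Fin k → ℝ) (A : Set (EuclideanSpace ℝ (Fin l))),
      MeasurableSet A → ν (prodSet k l a b A) = 0 := by
    intro a b A hA
    rw [hνdef, VectorMeasure.restrict_apply μ hTm (prodSet_measurableSet k l a b hA)]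
    have h : prodSet k l a b A ∩ T = prodSet k l a b (A ∩ B) := by
      ext x
      simp only [prodSet, hT, mem_inter_iff, mem_setOf_eq, mem_preimage]
      tauto
    rw [h]
    exact hμ a b (A ∩ B) (hA.inter hBm)
      (lt_of_le_of_lt (dimH_mono inter_subset_right) hdB')
  -- Jordan decomposition of ν
  set J := SignedMeasure.toJordanDecomposition ν with hJdef
  have hJ : J.toSignedMeasure = ν := SignedMeasure.toSignedMeasure_toJordanDecomposition ν
  have key : ∀ s : Set (EuclideanSpace ℝ (Fin (k + l))), MeasurableSet s → ν s = 0 →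
      J.posPart s = J.negPart s := by
    intro s hs hνs
    have h1 : J.toSignedMeasure s = (J.posPart s).toReal - (J.negPart s).toReal := by
      rw [JordanDecomposition.toSignedMeasure, VectorMeasure.sub_apply,
        Measure.toSignedMeasure_apply_measurable hs,
        Measure.toSignedMeasure_apply_measurable hs]
      rfl
    rw [hJ, hνs] at h1
    exact (ENNReal.toReal_eq_toReal_iff' (measure_ne_top _ _) (measure_ne_top _ _)).mp
      (sub_eq_zero.mp h1.symm)
  have hPN : J.posPart = J.negPart := by
    refine ext_of_generate_finite (piSys k l) (gen_piSys k l) (isPiSystem_piSys k l) ?_ ?_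
    · rintro s ⟨a, b, A, hA, rfl⟩
      exact key _ (prodSet_measurableSet k l a b hA) (hν0 a b A hA)
    · have hU : (⋃ n : ℕ, prodSet k l (fun _ => -(n : ℝ)) (fun _ => (n : ℝ))
          (univ : Set (EuclideanSpace ℝ (Fin l)))) = univ := by
        rw [iUnion_prodSet]; simp
      have hdir := (prodSet_mono k l (univ : Set (EuclideanSpace ℝ (Fin l)))).directed_le
      calc J.posPart univ
          = ⨆ n : ℕ, J.posPart (prodSet k l (fun _ => -(n : ℝ)) (fun _ => (n : ℝ)) univ) := by
            rw [← hU]; exact hdir.measure_iUnion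
        _ = ⨆ n : ℕ, J.negPart (prodSet k l (fun _ => -(n : ℝ)) (fun _ => (n : ℝ)) univ) :=
            iSup_congr fun n => key _ (prodSet_measurableSet k l _ _ MeasurableSet.univ)
              (hν0 _ _ _ MeasurableSet.univ)
        _ = J.negPart univ := by rw [← hU]; exact hdir.measure_iUnion.symm
  have hνF : ν F = 0 := by
    have h1 : J.toSignedMeasure F = (J.posPart F).toReal - (J.negPart F).toReal := by
      rw [JordanDecomposition.toSignedMeasure, VectorMeasure.sub_apply,
        Measure.toSignedMeasure_apply_measurable hF,
        Measure.toSignedMeasure_apply_measurable hF]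
      rfl
    rw [hJ] at h1
    rw [h1, hPN, sub_self]
  have hμF : μ F = ν F := by
    rw [hνdef, VectorMeasure.restrict_apply μ hTm hF, inter_eq_self_of_subset_left hFT]
  rw [hμF, hνF]
end

section
/- Let μ be a finite signed Borel measure on ℝⁿ with Hahn decomposition sets A_+ and A_− and positive part μ_+. Define P_+ = { x ∈ A_+ : there exists δ(x) > 0 such that for all r < δ(x), μ_+(B_r(x)) ≤ 10 μ(B_r(x)) }. Then μ(P_+) = μ(A_+). -/
open MeasureTheory Metric Filter Set

namespace SoftLeb

variable {α : Type*} [PseudoMetricSpace α] [MeasurableSpace α]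

lemma seq_pos {r : ℝ} (hr : 0 < r) (k : ℕ) : 0 < r * (((k : ℝ) + 1) / ((k : ℝ) + 2)) := by
  positivity

lemma seq_lt {r : ℝ} (hr : 0 < r) (k : ℕ) : r * (((k : ℝ) + 1) / ((k : ℝ) + 2)) < r := by
  have h : ((k : ℝ) + 1) / ((k : ℝ) + 2) < 1 := by
    rw [div_lt_one (by positivity)]; linarith
  calc r * (((k : ℝ) + 1) / ((k : ℝ) + 2)) < r * 1 := by
        exact mul_lt_mul_of_pos_left h hr
    _ = r := mul_one r

lemma ball_eq_iUnion (x : α) {r : ℝ} (hr : 0 < r) :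
    ball x r = ⋃ k : ℕ, closedBall x (r * (((k : ℝ) + 1) / ((k : ℝ) + 2))) := by
  ext y
  simp only [mem_ball, mem_iUnion, mem_closedBall]
  constructor
  · intro h
    have hd : 0 ≤ dist y x := dist_nonneg
    obtain ⟨k, hk⟩ := exists_nat_one_div_lt (show 0 < (r - dist y x) / r from div_pos (by linarith) hr)
    refine ⟨k, ?_⟩
    have h2 : 1 / ((k : ℝ) + 2) < (r - dist y x) / r := by
      refine lt_of_le_of_lt ?_ hk
      apply one_div_le_one_div_of_le
      · positivity
      · push_cast; linarith
    have h3 : r * (1 / ((k : ℝ) + 2)) < r - dist y x := by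
      calc r * (1 / ((k : ℝ) + 2)) < r * ((r - dist y x) / r) :=
            mul_lt_mul_of_pos_left h2 hr
        _ = r - dist y x := by field_simp
    have h4 : r * (((k : ℝ) + 1) / ((k : ℝ) + 2)) = r - r * (1 / ((k : ℝ) + 2)) := by
      field_simp; ring
    linarith
  · rintro ⟨k, hk⟩
    exact lt_of_le_of_lt hk (seq_lt hr k)

lemma measure_ball_eq_iSup (μ : Measure α) (x : α) {r : ℝ} (hr : 0 < r) :
    μ (ball x r) = ⨆ k : ℕ, μ (closedBall x (r * (((k : ℝ) + 1) / ((k : ℝ) + 2)))) := by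
  rw [ball_eq_iUnion x hr]
  refine Directed.measure_iUnion (Monotone.directed_le fun a b hab => ?_)
  refine closedBall_subset_closedBall ?_
  have : ((a : ℝ) + 1) / ((a : ℝ) + 2) ≤ ((b : ℝ) + 1) / ((b : ℝ) + 2) := by
    rw [div_le_div_iff₀ (by positivity) (by positivity)]
    have : (a : ℝ) ≤ b := by exact_mod_cast hab
    nlinarith
  nlinarith [hr.le]

lemma lsc_measure_ball (μ : Measure α) (r : ℝ) :
    LowerSemicontinuous fun x => μ (ball x r) := by
  intro x c hc
  simp only at hc
  rcases le_or_gt r 0 with h | hr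
  · rw [ball_eq_empty.2 h] at hc
    simp at hc
  · rw [measure_ball_eq_iSup μ x hr, gt_iff_lt, lt_iSup_iff] at hc
    obtain ⟨k, hk⟩ := hc
    have htr : r * (((k : ℝ) + 1) / ((k : ℝ) + 2)) < r := seq_lt hr k
    filter_upwards [Metric.ball_mem_nhds x (show (0:ℝ) < r - r * (((k : ℝ) + 1) / ((k : ℝ) + 2)) by linarith)] with y hy
    refine lt_of_lt_of_le hk (measure_mono fun z hz => ?_)
    rw [mem_ball] at hy ⊢
    rw [mem_closedBall] at hz
    calc dist z y ≤ dist z x + dist x y := dist_triangle z x y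
      _ < r * (((k : ℝ) + 1) / ((k : ℝ) + 2)) + (r - r * (((k : ℝ) + 1) / ((k : ℝ) + 2))) := by
          rw [dist_comm x y]; exact add_lt_add_of_le_of_lt hz hy
      _ = r := by ring

end SoftLeb

open SoftLeb

/-- **A soft substitute for the Lebesgue differentiation theorem.** Let `μ` be a finite
signed Borel measure on `ℝⁿ` with Hahn decomposition `ℝⁿ = A₊ ∪ A₋` (`A₋ = A₊ᶜ`) and
positive part `μ₊`. Let
`P₊ = {x ∈ A₊ : ∃ δ > 0, ∀ r < δ, μ₊(B_r(x)) ≤ 10 μ(B_r(x))}`.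
Then `μ(P₊) = μ(A₊)`. -/

theorem measure_of_good_points_eq (n : ℕ)
    (μ : SignedMeasure (EuclideanSpace ℝ (Fin n)))
    (Aplus : Set (EuclideanSpace ℝ (Fin n))) (hAplus : MeasurableSet Aplus)
    (hpos : 0 ≤[Aplus] μ) (hneg : μ ≤[Aplusᶜ] 0) :
    μ {x : EuclideanSpace ℝ (Fin n) | x ∈ Aplus ∧ ∃ δ : ℝ, 0 < δ ∧
        ∀ r : ℝ, 0 < r → r < δ →
          (μ.toJordanDecomposition.posPart (Metric.ball x r)).toReal
            ≤ 10 * μ (Metric.ball x r)}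
      = μ Aplus := by
  classical
  set νp := μ.toJordanDecomposition.posPart with hnpdef
  set νm := μ.toJordanDecomposition.negPart with hnmdef
  -- μ s in terms of the Jordan decomposition
  have hμs : ∀ s : Set (EuclideanSpace ℝ (Fin n)), MeasurableSet s →
      μ s = (νp s).toReal - (νm s).toReal := by
    intro s hs
    conv_lhs => rw [← μ.toSignedMeasure_toJordanDecomposition]
    rw [JordanDecomposition.toSignedMeasure]
    exact Measure.toSignedMeasure_sub_apply hs
  -- νm vanishes on Aplus
  obtain ⟨i, hi₁, hi₂, hi₃, hpost, hnegt⟩ := μ.toJordanDecomposition_spec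
  have hνmA : νm Aplus = 0 := by
    rw [hnmdef, hnegt, SignedMeasure.toMeasureOfLEZero_apply _ hi₃ hi₁.compl hAplus]
    have h1 : 0 ≤ μ (iᶜ ∩ Aplus) :=
      VectorMeasure.nonneg_of_zero_le_restrict _
        (VectorMeasure.zero_le_restrict_subset _ hAplus inter_subset_right hpos)
    have h2 : μ (iᶜ ∩ Aplus) ≤ 0 :=
      VectorMeasure.nonpos_of_restrict_le_zero _
        (VectorMeasure.restrict_le_zero_subset _ hi₁.compl inter_subset_left hi₃)
    have : μ (iᶜ ∩ Aplus) = 0 := le_antisymm h2 h1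
    simp [this]
  -- cond in ENNReal form
  have hcond_iff : ∀ r : ℝ, 0 < r → ∀ x,
      ((νp (ball x r)).toReal ≤ 10 * μ (ball x r) ↔
        10 * νm (ball x r) ≤ 9 * νp (ball x r)) := by
    intro r hr x
    rw [hμs _ measurableSet_ball]
    have ha := measure_ne_top νp (ball x r)
    have hb := measure_ne_top νm (ball x r)
    rw [← ENNReal.toReal_le_toReal (by finiteness) (by finiteness),
      ENNReal.toReal_mul, ENNReal.toReal_mul, ENNReal.toReal_ofNat, ENNReal.toReal_ofNat]
    have h1 := ENNReal.toReal_nonneg (a := νp (ball x r))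
    have h2 := ENNReal.toReal_nonneg (a := νm (ball x r))
    constructor <;> intro <;> linarith
  -- the good set in ENNReal form
  set G : Set (EuclideanSpace ℝ (Fin n)) := {x | ∃ δ : ℝ, 0 < δ ∧ ∀ r : ℝ, 0 < r → r < δ →
      10 * νm (ball x r) ≤ 9 * νp (ball x r)} with hGdef
  have hPeq : {x : EuclideanSpace ℝ (Fin n) | x ∈ Aplus ∧ ∃ δ : ℝ, 0 < δ ∧
      ∀ r : ℝ, 0 < r → r < δ →
        (νp (Metric.ball x r)).toReal ≤ 10 * μ (Metric.ball x r)} = Aplus ∩ G := by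
    ext x
    simp only [mem_setOf_eq, mem_inter_iff, hGdef]
    refine and_congr_right fun _ => ⟨fun ⟨δ, hδ, h⟩ => ⟨δ, hδ, fun r h0 hrδ =>
      (hcond_iff r h0 x).1 (h r h0 hrδ)⟩, fun ⟨δ, hδ, h⟩ => ⟨δ, hδ, fun r h0 hrδ =>
      (hcond_iff r h0 x).2 (h r h0 hrδ)⟩⟩
  -- rational description of G
  have hGrat : G = ⋃ q : {q : ℚ // 0 < q}, ⋂ p : {p : ℚ // 0 < p},
      {x | ((p : ℚ) : ℝ) < ((q : ℚ) : ℝ) →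
        10 * νm (ball x ((p : ℚ) : ℝ)) ≤ 9 * νp (ball x ((p : ℚ) : ℝ))} := by
    ext x
    simp only [hGdef, mem_setOf_eq, mem_iUnion, mem_iInter]
    constructor
    · rintro ⟨δ, hδ, h⟩
      obtain ⟨q, hq1, hq2⟩ := exists_rat_btwn hδ
      refine ⟨⟨q, by exact_mod_cast hq1⟩, fun p hpq => ?_⟩
      exact h _ (by exact_mod_cast p.2) (lt_trans hpq hq2)
    · rintro ⟨q, hq⟩
      refine ⟨((q : ℚ) : ℝ), by exact_mod_cast q.2, fun r h0 hrδ => ?_⟩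
      rw [measure_ball_eq_iSup νm x h0, ENNReal.mul_iSup]
      refine iSup_le fun k => ?_
      obtain ⟨p, hp1, hp2⟩ := exists_rat_btwn (seq_lt h0 k)
      have hp0 : (0 : ℝ) < (p : ℝ) := lt_trans (seq_pos h0 k) hp1
      have hball := hq ⟨p, by exact_mod_cast hp0⟩ (lt_trans hp2 hrδ)
      calc 10 * νm (closedBall x (r * (((k : ℝ) + 1) / ((k : ℝ) + 2))))
          ≤ 10 * νm (ball x ((p : ℝ))) :=
            mul_le_mul_right (measure_mono (closedBall_subset_ball hp1)) _
        _ ≤ 9 * νp (ball x ((p : ℝ))) := hball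
        _ ≤ 9 * νp (ball x r) :=
            mul_le_mul_right (measure_mono (ball_subset_ball hp2.le)) _
  have hGmeas : MeasurableSet G := by
    rw [hGrat]
    refine MeasurableSet.iUnion fun q => MeasurableSet.iInter fun p => ?_
    by_cases hc : ((p : ℚ) : ℝ) < ((q : ℚ) : ℝ)
    · simp only [hc, forall_true_left]
      exact measurableSet_le
        (Measurable.const_mul ((lsc_measure_ball νm _).measurable) _)
        (Measurable.const_mul ((lsc_measure_ball νp _).measurable) _)
    · simp [hc]
  -- a.e. points of νp are good
  have hsing : νm ⟂ₘ νp := μ.toJordanDecomposition.mutuallySingular.symm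
  have hrn : νm.rnDeriv νp =ᵐ[νp] 0 := (Measure.rnDeriv_eq_zero _ _).2 hsing
  have hae : ∀ᵐ x ∂νp, Tendsto (fun t => νm (closedBall x t) / νp (closedBall x t))
      (nhdsWithin 0 (Ioi 0)) (nhds 0) := by
    filter_upwards [Besicovitch.ae_tendsto_rnDeriv νm νp, hrn] with x h1 h2
    rw [h2] at h1
    exact h1
  -- the key analytic step
  have hkey : ∀ x, Tendsto (fun t => νm (closedBall x t) / νp (closedBall x t))
      (nhdsWithin 0 (Ioi 0)) (nhds 0) → x ∈ G := by
    intro x hx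
    have h1 : ∀ᶠ t in nhdsWithin (0:ℝ) (Ioi 0),
        νm (closedBall x t) / νp (closedBall x t) < 1/2 :=
      hx.eventually_lt_const (by norm_num)
    rw [eventually_nhdsWithin_iff, Metric.eventually_nhds_iff] at h1
    obtain ⟨ε, hε, hball⟩ := h1
    have hstep : ∀ t : ℝ, 0 < t → t < ε →
        νm (closedBall x t) ≤ (1/2) * νp (closedBall x t) := by
      intro t ht htε
      have h := hball (show dist t 0 < ε by rw [Real.dist_eq, sub_zero, abs_of_pos ht]; exact htε) ht
      by_cases hb : νp (closedBall x t) = 0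
      · rw [hb] at h ⊢
        by_cases ha : νm (closedBall x t) = 0
        · simp [ha]
        · rw [ENNReal.div_zero ha] at h
          exact absurd h (by simp)
      · rw [ENNReal.div_lt_iff (Or.inl hb) (Or.inl (measure_ne_top _ _))] at h
        exact h.le
    refine ⟨ε, hε, fun r hr hrε => ?_⟩
    rw [measure_ball_eq_iSup νm x hr, ENNReal.mul_iSup]
    refine iSup_le fun k => ?_
    have hk1 : 0 < r * (((k : ℝ) + 1) / ((k : ℝ) + 2)) := seq_pos hr k
    have hk2 : r * (((k : ℝ) + 1) / ((k : ℝ) + 2)) < ε := lt_trans (seq_lt hr k) hrε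
    calc 10 * νm (closedBall x (r * (((k : ℝ) + 1) / ((k : ℝ) + 2))))
        ≤ 10 * ((1/2) * νp (closedBall x (r * (((k : ℝ) + 1) / ((k : ℝ) + 2))))) :=
          mul_le_mul_right (hstep _ hk1 hk2) _
      _ = 5 * νp (closedBall x (r * (((k : ℝ) + 1) / ((k : ℝ) + 2)))) := by
          rw [← mul_assoc]
          congr 1
          rw [one_div]
          refine (ENNReal.toReal_eq_toReal_iff'
            (ENNReal.mul_ne_top (show (10:ENNReal) ≠ ⊤ by norm_num)
              (ENNReal.inv_ne_top.2 (show (2:ENNReal) ≠ 0 by norm_num)))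
            (show (5:ENNReal) ≠ ⊤ by norm_num)).1 ?_
          rw [ENNReal.toReal_mul]
          norm_num
      _ ≤ 9 * νp (ball x r) :=
          mul_le_mul' (by norm_num) (measure_mono (closedBall_subset_ball (seq_lt hr k)))
  -- the bad part is νp-null
  have hbad : νp (Aplus \ (Aplus ∩ G)) = 0 := by
    have h0 : νp {x | ¬ Tendsto (fun t => νm (closedBall x t) / νp (closedBall x t))
        (nhdsWithin 0 (Ioi 0)) (nhds 0)} = 0 := by
      rw [← ae_iff] at *
      exact hae
    refine measure_mono_null (fun x hx => ?_) h0
    intro hT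
    exact hx.2 ⟨hx.1, hkey x hT⟩
  -- assemble
  have hPmeas : MeasurableSet (Aplus ∩ G) := hAplus.inter hGmeas
  have hdiff0 : μ (Aplus \ (Aplus ∩ G)) = 0 := by
    rw [hμs _ (hAplus.diff hPmeas), hbad,
      measure_mono_null diff_subset hνmA]
    simp
  have hsplit : μ Aplus = μ (Aplus ∩ G) + μ (Aplus \ (Aplus ∩ G)) := by
    conv_lhs => rw [← Set.union_diff_cancel (inter_subset_left : Aplus ∩ G ⊆ Aplus)]
    exact VectorMeasure.of_union disjoint_sdiff_right hPmeas (hAplus.diff hPmeas)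
  rw [hPeq, hsplit, hdiff0, add_zero]
end
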